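/- Let R be a PVMD and P a t-prime ideal of R. Then: (1) T(P) ⊊ Ω(P) if and only if T(P) = R_P ∩ Ω(P) and Ω(P) ⊄ R_P; (2) the following are equivalent: (i) (P·Ω(P))_{t₁} = Ω(P), where t₁ is the t-operation of the ring Ω(P); (ii) Ω(P) ⊄ R_P; (iii) P = √I for some t-invertible ideal I of R. -/

import Mathlib

/-!
Common definitions: star operations (`v`- and `t`-closure), `t`-ideals, `t`-invertibility,
PVMDs, overrings, `t`-linked and `t`-flat overrings, localizations inside the quotient
field, Nagata and Kaplansky transforms, endomorphism rings of ideals.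
-/

open scoped Classical

namespace PVMDPaper

noncomputable section

section Generic

variable (A : Type*) [CommRing A] (K : Type*) [Field K] [Algebra A K]

/-- The image of an integral ideal of `A` inside the field `K`, as an `A`-submodule of `K`. -/
def toK (I : Ideal A) : Submodule A K := Submodule.map (Algebra.linearMap A K) I

variable {A K}

/-- The dual `I⁻¹ = (A : I) = {x ∈ K : x I ⊆ A}` of a submodule of `K`. -/
def dual (I : Submodule A K) : Submodule A K := 1 / I

/-- The `v`-closure `I_v = (I⁻¹)⁻¹`. -/
def vOp (I : Submodule A K) : Submodule A K := 1 / (1 / I)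

/-- The `t`-closure `I_t`: the union of `J_v` where `J` ranges over the nonzero finitely
generated submodules `J ≤ I` (the union of this directed family is its supremum). -/
def tOp (I : Submodule A K) : Submodule A K :=
  sSup {V | ∃ J : Submodule A K, J ≠ ⊥ ∧ J.FG ∧ J ≤ I ∧ V = vOp J}

variable (K)

/-- An (integral) ideal `I` of `A` is a `t`-ideal if `I = I_t`. -/
def IsTIdeal (I : Ideal A) : Prop := tOp (toK A K I) = toK A K I

/-- An ideal `I` is `t`-invertible if `(I I⁻¹)_t = A`. -/
def IsTInvertible (I : Ideal A) : Prop := tOp (toK A K I * dual (toK A K I)) = 1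

/-- A `t`-maximal ideal: an ideal maximal in the set of proper integral `t`-ideals. -/
def IsTMaximal (M : Ideal A) : Prop :=
  M ≠ ⊤ ∧ IsTIdeal K M ∧ ∀ J : Ideal A, J ≠ ⊤ → IsTIdeal K J → M ≤ J → J = M

variable (A)

/-- `A` is a Prüfer `v`-multiplication domain: every nonzero finitely generated ideal
is `t`-invertible. -/
def IsPVMD : Prop := ∀ I : Ideal A, I ≠ ⊥ → I.FG → IsTInvertible K I

/-- `Spec_t(A)` is Noetherian: the ascending chain condition on radical `t`-ideals. -/
def TSpecNoetherian : Prop :=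
  ∀ f : ℕ →o Ideal A, (∀ n, IsTIdeal K (f n) ∧ (f n).radical = f n) →
    ∃ n, ∀ m, n ≤ m → f m = f n

variable {A K}

/-- A submodule of `K` is a subring of `K` iff it contains `1` and is closed under
multiplication (being an additive subgroup already). -/
def IsSubringOf (S : Submodule A K) : Prop :=
  (1 : K) ∈ S ∧ ∀ x ∈ S, ∀ y ∈ S, x * y ∈ S

variable (K)

/-- The localization `A_P = {a/s : a ∈ A, s ∈ A ∖ P}` viewed as a subset of `K`. -/
def loc (P : Ideal A) : Set K :=
  {x | ∃ a s : A, s ∉ P ∧ x * algebraMap A K s = algebraMap A K a}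

/-- The set `J A_P = {a/s : a ∈ J, s ∈ A ∖ P} ⊆ K`. -/
def locIdealAt (J P : Ideal A) : Set K :=
  {x | ∃ a ∈ J, ∃ s : A, s ∉ P ∧ x * algebraMap A K s = algebraMap A K a}

/-- `Z(A, I)`: the set of zero divisors on `A/I`. -/
def ZSet (I : Ideal A) : Set A := {x | ∃ a : A, a ∉ I ∧ x * a ∈ I}

/-- `Q` is a maximal prime ideal of `Z(A,I)`: a prime contained in `Z(A,I)`, maximal
(under inclusion) among the primes contained in `Z(A,I)`. -/
def MaxPrimeOfZ (I Q : Ideal A) : Prop :=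
  Q.IsPrime ∧ (Q : Set A) ⊆ ZSet I ∧
    ∀ Q' : Ideal A, Q'.IsPrime → (Q' : Set A) ⊆ ZSet I → Q ≤ Q' → Q' = Q

end Generic

section Overring

variable {R : Type*} [CommRing R] [IsDomain R]
variable {K : Type*} [Field K] [Algebra R K] [IsFractionRing R K]

/-- The extension `IT` of an ideal `I` of `R` to an overring `T`, as a `T`-submodule of `K`. -/
def extendI (I : Ideal R) (T : Subalgebra R K) : Submodule T K :=
  Submodule.span T (algebraMap R K '' (I : Set R))

/-- The extension `IT` of an `R`-submodule `I` of `K` to an overring `T`. -/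
def extendS (I : Submodule R K) (T : Subalgebra R K) : Submodule T K :=
  Submodule.span T (I : Set K)

/-- An overring `T` of `R` is `t`-linked over `R` if `(IT)⁻¹ = T` for each finitely
generated ideal `I` of `R` with `I⁻¹ = R`. -/
def IsTLinked (T : Subalgebra R K) : Prop :=
  ∀ I : Ideal R, I.FG → dual (toK R K I) = 1 → dual (extendI I T) = 1

/-- An overring `T` of `R` is `t`-flat over `R` if `T_M = R_{M ∩ R}` for each
`t`-maximal ideal `M` of `T`. -/
def IsTFlat (T : Subalgebra R K) : Prop :=
  ∀ M : Ideal T, IsTMaximal K M → loc K M = loc K (M.comap (algebraMap R T))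

variable (R K)

/-- `R` is a `tQR`-domain: a PVMD all of whose `t`-linked overrings are localizations
of `R` at multiplicative sets. -/
def IsTQR : Prop :=
  IsPVMD R K ∧ ∀ T : Subalgebra R K, IsTLinked T → ∃ S : Submonoid R,
    (T : Set K) = {x | ∃ a : R, ∃ s ∈ S, x * algebraMap R K s = algebraMap R K a}

variable {R K}
variable (K)

/-- The endomorphism ring `(I : I) = {x ∈ K : x I ⊆ I}` of an ideal `I`, as an
overring of `R`. -/
def endoRing (I : Ideal R) : Subalgebra R K where
  carrier := {x : K | ∀ y ∈ toK R K I, x * y ∈ toK R K I}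
  mul_mem' := by
    intro a b ha hb y hy
    rw [mul_assoc]
    exact ha _ (hb _ hy)
  one_mem' := by
    intro y hy
    rwa [one_mul]
  add_mem' := by
    intro a b ha hb y hy
    rw [add_mul]
    exact Submodule.add_mem _ (ha y hy) (hb y hy)
  zero_mem' := by
    intro y hy
    rw [zero_mul]
    exact Submodule.zero_mem _
  algebraMap_mem' := by
    intro r y hy
    rw [← Algebra.smul_def]
    exact Submodule.smul_mem _ r hy

set_option synthInstance.maxHeartbeats 400000 in
/-- The ideal `I`, viewed as an ideal of its endomorphism ring `(I : I)`. -/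
def idealInEndo (I : Ideal R) : Ideal (endoRing K I) where
  carrier := {x | (x : K) ∈ toK R K I}
  add_mem' := by
    intro a b ha hb
    simp only [Set.mem_setOf_eq] at *
    rw [AddMemClass.coe_add]
    exact Submodule.add_mem _ ha hb
  zero_mem' := by
    simp only [Set.mem_setOf_eq, ZeroMemClass.coe_zero]
    exact Submodule.zero_mem _
  smul_mem' := by
    intro c x hx
    simp only [Set.mem_setOf_eq] at *
    rw [smul_eq_mul, MulMemClass.coe_mul]
    exact c.2 _ hx

/-- The Kaplansky transform `Ω(I) = {u ∈ K : ∀ a ∈ I, ∃ n ≥ 1, u aⁿ ∈ R}`, as an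
overring of `R`. -/
def kaplansky (I : Ideal R) : Subalgebra R K where
  carrier := {u : K | ∀ a ∈ I, ∃ n : ℕ, 0 < n ∧
    ∃ r : R, u * (algebraMap R K a) ^ n = algebraMap R K r}
  mul_mem' := by
    intro u v hu hv a ha
    obtain ⟨n, hn, r, hr⟩ := hu a ha
    obtain ⟨m, hm, s, hs⟩ := hv a ha
    refine ⟨n + m, by omega, r * s, ?_⟩
    rw [map_mul, ← hr, ← hs, pow_add]
    ring
  one_mem' := by
    intro a ha
    exact ⟨1, one_pos, a, by rw [pow_one, one_mul]⟩
  add_mem' := by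
    intro u v hu hv a ha
    obtain ⟨n, hn, r, hr⟩ := hu a ha
    obtain ⟨m, hm, s, hs⟩ := hv a ha
    refine ⟨n + m, by omega, r * a ^ m + s * a ^ n, ?_⟩
    rw [map_add, map_mul, map_mul, map_pow, map_pow, ← hr, ← hs, pow_add, add_mul]
    ring
  zero_mem' := by
    intro a ha
    exact ⟨1, one_pos, 0, by rw [map_zero, zero_mul]⟩
  algebraMap_mem' := by
    intro r a ha
    exact ⟨1, one_pos, r * a, by rw [map_mul, pow_one]⟩

/-- The Nagata (ideal) transform `T(I) = ⋃_{n ≥ 1} (R : Iⁿ)`, as an overring of `R`. -/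
def nagata (I : Ideal R) : Subalgebra R K where
  carrier := {x : K | ∃ n : ℕ, ∀ y ∈ I ^ (n + 1),
    ∃ r : R, x * algebraMap R K y = algebraMap R K r}
  mul_mem' := by
    intro x x' hx hx'
    obtain ⟨n, hn⟩ := hx
    obtain ⟨m, hm⟩ := hx'
    refine ⟨n + m + 1, fun y hy => ?_⟩
    rw [show n + m + 1 + 1 = (n + 1) + (m + 1) by omega, pow_add] at hy
    refine Submodule.mul_induction_on hy ?_ ?_
    · intro a ha b hb
      obtain ⟨r, hr⟩ := hn a ha
      obtain ⟨s, hs⟩ := hm b hb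
      refine ⟨r * s, ?_⟩
      rw [map_mul, map_mul, ← hr, ← hs]
      ring
    · rintro y1 y2 ⟨r1, h1⟩ ⟨r2, h2⟩
      exact ⟨r1 + r2, by rw [map_add, map_add, mul_add, h1, h2]⟩
  one_mem' := ⟨0, fun y _ => ⟨y, by rw [one_mul]⟩⟩
  add_mem' := by
    intro x x' hx hx'
    obtain ⟨n, hn⟩ := hx
    obtain ⟨m, hm⟩ := hx'
    refine ⟨n + m + 1, fun y hy => ?_⟩
    have h1 : y ∈ I ^ (n + 1) := Ideal.pow_le_pow_right (by omega) hy
    have h2 : y ∈ I ^ (m + 1) := Ideal.pow_le_pow_right (by omega) hy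
    obtain ⟨r, hr⟩ := hn y h1
    obtain ⟨s, hs⟩ := hm y h2
    exact ⟨r + s, by rw [map_add, add_mul, hr, hs]⟩
  zero_mem' := ⟨0, fun y _ => ⟨0, by rw [map_zero, zero_mul]⟩⟩
  algebraMap_mem' := by
    intro r
    exact ⟨0, fun y _ => ⟨r * y, by rw [map_mul]⟩⟩

end Overring

section AuxGeneric

variable {A : Type*} [CommRing A] {K : Type*} [Field K] [Algebra A K]

lemma mem_dual {X : Submodule A K} {z : K} :
    z ∈ dual X ↔ ∀ y ∈ X, z * y ∈ (1 : Submodule A K) :=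
  Submodule.mem_div_iff_forall_mul_mem

lemma one_mem_one : (1 : K) ∈ (1 : Submodule A K) :=
  Submodule.mem_one.mpr ⟨1, map_one _⟩

lemma one_mul_mem {x y : K} (hx : x ∈ (1 : Submodule A K)) (hy : y ∈ (1 : Submodule A K)) :
    x * y ∈ (1 : Submodule A K) := by
  obtain ⟨a, rfl⟩ := Submodule.mem_one.mp hx
  obtain ⟨b, rfl⟩ := Submodule.mem_one.mp hy
  exact Submodule.mem_one.mpr ⟨a * b, map_mul _ _ _⟩

lemma dual_antitone {X Y : Submodule A K} (h : X ≤ Y) : dual Y ≤ dual X := fun z hz =>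
  mem_dual.mpr fun y hy => mem_dual.mp hz y (h hy)

lemma le_vOp (X : Submodule A K) : X ≤ vOp X := fun z hz =>
  mem_dual.mpr fun y hy => by rw [mul_comm]; exact mem_dual.mp hy z hz

lemma vOp_mono {X Y : Submodule A K} (h : X ≤ Y) : vOp X ≤ vOp Y :=
  dual_antitone (dual_antitone h)

lemma dual_vOp (X : Submodule A K) : dual (vOp X) = dual X :=
  le_antisymm (dual_antitone (le_vOp X)) (le_vOp (dual X))

lemma vOp_dual (X : Submodule A K) : vOp (dual X) = dual X := dual_vOp X

lemma vOp_idem (X : Submodule A K) : vOp (vOp X) = vOp X := dual_vOp (dual X)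

lemma one_le_dual {X : Submodule A K} (h : X ≤ 1) : 1 ≤ dual X := fun z hz =>
  mem_dual.mpr fun y hy => one_mul_mem hz (h hy)

lemma dual_one : dual (1 : Submodule A K) = 1 :=
  le_antisymm (fun z hz => by simpa using mem_dual.mp hz 1 one_mem_one) (one_le_dual le_rfl)

lemma vOp_le_one {X : Submodule A K} (h : X ≤ 1) : vOp X ≤ 1 := by
  have h2 : dual (dual X) ≤ dual 1 := dual_antitone (one_le_dual h)
  rw [dual_one] at h2
  exact h2

lemma vOp_one : vOp (1 : Submodule A K) = 1 := le_antisymm (vOp_le_one le_rfl) (le_vOp 1)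

lemma mul_mem_vOp {X Y : Submodule A K} {z w : K} (hz : z ∈ vOp X) (hw : w ∈ vOp Y) :
    z * w ∈ vOp (X * Y) := by
  refine mem_dual.mpr fun y hy => ?_
  have h1 : ∀ x ∈ X, y * x ∈ dual Y := fun x hx =>
    mem_dual.mpr fun y' hy' => by
      have := mem_dual.mp hy (x * y') (Submodule.mul_mem_mul hx hy')
      rwa [show y * x * y' = y * (x * y') by ring]
  have h2 : w * y ∈ dual X := mem_dual.mpr fun x hx => by
    have := mem_dual.mp hw (y * x) (h1 x hx)
    rwa [show w * y * x = w * (y * x) by ring]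
  have := mem_dual.mp hz (w * y) h2
  rwa [show z * (w * y) = z * w * y by ring] at this

lemma vOp_mul_le (X Y : Submodule A K) : vOp X * vOp Y ≤ vOp (X * Y) :=
  Submodule.mul_le.mpr fun _ hz _ hw => mul_mem_vOp hz hw

lemma vOp_pow_le (X : Submodule A K) : ∀ n : ℕ, (vOp X) ^ (n + 1) ≤ vOp (X ^ (n + 1))
  | 0 => by simpa [pow_one] using le_rfl
  | n + 1 => by
    calc (vOp X) ^ (n + 1 + 1) = (vOp X) ^ (n + 1) * vOp X := by rw [pow_succ]
    _ ≤ vOp (X ^ (n + 1)) * vOp X := mul_le_mul' (vOp_pow_le X n) le_rfl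
    _ ≤ vOp (X ^ (n + 1) * X) := vOp_mul_le _ _
    _ = vOp (X ^ (n + 1 + 1)) := by rw [← pow_succ]

lemma vOp_le_tOp {X J : Submodule A K} (hJ : J ≠ ⊥) (hfg : J.FG) (hle : J ≤ X) :
    vOp J ≤ tOp X :=
  le_sSup ⟨J, hJ, hfg, hle, rfl⟩

lemma le_tOp (X : Submodule A K) : X ≤ tOp X := fun z hz => by
  rcases eq_or_ne z 0 with rfl | h0
  · exact zero_mem _
  · refine vOp_le_tOp (X := X) (J := Submodule.span A {z}) ?_ (Submodule.fg_span_singleton z)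
      (Submodule.span_le.mpr (by simpa using hz)) (le_vOp _ (Submodule.mem_span_singleton_self z))
    simpa [Submodule.span_singleton_eq_bot] using h0

lemma tOp_le {X : Submodule A K} {Y : Submodule A K}
    (h : ∀ J : Submodule A K, J ≠ ⊥ → J.FG → J ≤ X → vOp J ≤ Y) : tOp X ≤ Y :=
  sSup_le (by rintro V ⟨J, h1, h2, h3, rfl⟩; exact h J h1 h2 h3)

lemma tOp_mono {X Y : Submodule A K} (h : X ≤ Y) : tOp X ≤ tOp Y :=
  tOp_le fun _ h1 h2 h3 => vOp_le_tOp h1 h2 (h3.trans h)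

lemma tOp_le_vOp (X : Submodule A K) : tOp X ≤ vOp X := tOp_le fun _ _ _ h3 => vOp_mono h3

lemma tOp_le_one {X : Submodule A K} (h : X ≤ 1) : tOp X ≤ 1 :=
  (tOp_le_vOp X).trans (vOp_le_one h)

lemma mem_tOp {X : Submodule A K} (hX : X ≠ ⊥) {z : K} (hz : z ∈ tOp X) :
    ∃ J : Submodule A K, J ≠ ⊥ ∧ J.FG ∧ J ≤ X ∧ z ∈ vOp J := by
  obtain ⟨x0, hx0X, hx00⟩ := (Submodule.ne_bot_iff _).mp hX
  have hsb : Submodule.span A {x0} ≠ ⊥ := by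
    simpa [Submodule.span_singleton_eq_bot] using hx00
  have hne : {V | ∃ J : Submodule A K, J ≠ ⊥ ∧ J.FG ∧ J ≤ X ∧ V = vOp J}.Nonempty :=
    ⟨vOp (Submodule.span A {x0}), Submodule.span A {x0}, hsb,
      Submodule.fg_span_singleton x0, Submodule.span_le.mpr (by simpa using hx0X), rfl⟩
  have hdir : DirectedOn (· ≤ ·) {V | ∃ J : Submodule A K, J ≠ ⊥ ∧ J.FG ∧ J ≤ X ∧ V = vOp J} := by
    rintro V1 ⟨J1, h1b, h1f, h1l, rfl⟩ V2 ⟨J2, h2b, h2f, h2l, rfl⟩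
    refine ⟨vOp (J1 ⊔ J2), ⟨J1 ⊔ J2, ?_, h1f.sup h2f, sup_le h1l h2l, rfl⟩,
      vOp_mono le_sup_left, vOp_mono le_sup_right⟩
    intro hb
    exact h1b (le_bot_iff.mp (hb ▸ le_sup_left))
  obtain ⟨V, ⟨J, hJ1, hJ2, hJ3, rfl⟩, hzV⟩ := (Submodule.mem_sSup_of_directed hne hdir).mp hz
  exact ⟨J, hJ1, hJ2, hJ3, hzV⟩

lemma tOp_bot : tOp (⊥ : Submodule A K) = ⊥ := by
  refine le_antisymm (tOp_le fun J h1 _ h3 => absurd (le_bot_iff.mp h3) h1) bot_le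

lemma finset_tOp {X : Submodule A K} (hX : X ≠ ⊥) (s : Finset K)
    (hs : ∀ g ∈ s, g ∈ tOp X) :
    ∃ J : Submodule A K, J ≠ ⊥ ∧ J.FG ∧ J ≤ X ∧ ∀ g ∈ s, g ∈ vOp J := by
  classical
  induction s using Finset.induction with
  | empty =>
    obtain ⟨x0, hx0X, hx00⟩ := (Submodule.ne_bot_iff _).mp hX
    exact ⟨Submodule.span A {x0}, by simpa [Submodule.span_singleton_eq_bot] using hx00,
      Submodule.fg_span_singleton x0, Submodule.span_le.mpr (by simpa using hx0X),
      fun g hg => absurd hg (Finset.notMem_empty g)⟩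
  | insert _ _ hgs ih =>
    rename_i g s
    obtain ⟨J1, hJ1b, hJ1f, hJ1l, hJ1m⟩ := ih (fun g' hg' => hs g' (Finset.mem_insert_of_mem hg'))
    obtain ⟨J2, hJ2b, hJ2f, hJ2l, hJ2m⟩ := mem_tOp hX (hs g (Finset.mem_insert_self g s))
    refine ⟨J1 ⊔ J2, fun hb => hJ1b (le_bot_iff.mp (hb ▸ le_sup_left)), hJ1f.sup hJ2f,
      sup_le hJ1l hJ2l, fun g' hg' => ?_⟩
    rcases Finset.mem_insert.mp hg' with rfl | hg'
    · exact vOp_mono le_sup_right hJ2m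
    · exact vOp_mono le_sup_left (hJ1m g' hg')

lemma tOp_idem (X : Submodule A K) : tOp (tOp X) = tOp X := by
  rcases eq_or_ne X ⊥ with rfl | hX
  · rw [tOp_bot, tOp_bot]
  refine le_antisymm (tOp_le fun J hJb hJf hJl => ?_) (le_tOp _)
  obtain ⟨s, rfl⟩ := hJf
  obtain ⟨J', hJ'b, hJ'f, hJ'l, hJ'm⟩ := finset_tOp hX s (fun g hg => hJl (Submodule.subset_span hg))
  have h1 : Submodule.span A (↑s : Set K) ≤ vOp J' := Submodule.span_le.mpr hJ'm
  calc vOp (Submodule.span A (↑s : Set K)) ≤ vOp (vOp J') := vOp_mono h1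
  _ = vOp J' := vOp_idem J'
  _ ≤ tOp X := vOp_le_tOp hJ'b hJ'f hJ'l

lemma tOp_mul_le (X Y : Submodule A K) : tOp X * tOp Y ≤ tOp (X * Y) := by
  rcases eq_or_ne X ⊥ with rfl | hX
  · rw [tOp_bot]; simp
  rcases eq_or_ne Y ⊥ with rfl | hY
  · rw [tOp_bot]; simp
  refine Submodule.mul_le.mpr fun z hz w hw => ?_
  obtain ⟨J1, h1b, h1f, h1l, h1m⟩ := mem_tOp hX hz
  obtain ⟨J2, h2b, h2f, h2l, h2m⟩ := mem_tOp hY hw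
  have hbot : J1 * J2 ≠ ⊥ := by
    obtain ⟨x1, hx1, hx10⟩ := (Submodule.ne_bot_iff _).mp h1b
    obtain ⟨x2, hx2, hx20⟩ := (Submodule.ne_bot_iff _).mp h2b
    intro hb
    have : x1 * x2 ∈ J1 * J2 := Submodule.mul_mem_mul hx1 hx2
    rw [hb, Submodule.mem_bot] at this
    exact (mul_ne_zero hx10 hx20) this
  exact vOp_le_tOp hbot (h1f.mul h2f) (mul_le_mul' h1l h2l) (mul_mem_vOp h1m h2m)

lemma mem_span_singleton_mul' {c z : K} {X : Submodule A K} :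
    z ∈ Submodule.span A {c} * X ↔ ∃ w ∈ X, z = c * w := by
  rw [Submodule.mem_span_singleton_mul]
  exact ⟨fun ⟨w, h1, h2⟩ => ⟨w, h1, h2.symm⟩, fun ⟨w, h1, h2⟩ => ⟨w, h1, h2.symm⟩⟩

lemma dual_span_singleton_mul {c : K} (hc : c ≠ 0) (X : Submodule A K) :
    dual (Submodule.span A {c} * X) = Submodule.span A {c⁻¹} * dual X := by
  refine le_antisymm (fun z hz => ?_) (fun z hz => ?_)
  · refine mem_span_singleton_mul'.mpr ⟨c * z, mem_dual.mpr fun y hy => ?_, by field_simp⟩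
    have := mem_dual.mp hz (c * y) (mem_span_singleton_mul'.mpr ⟨y, hy, rfl⟩)
    rwa [show z * (c * y) = c * z * y by ring] at this
  · obtain ⟨w, hw, rfl⟩ := mem_span_singleton_mul'.mp hz
    refine mem_dual.mpr fun y hy => ?_
    obtain ⟨y', hy', rfl⟩ := mem_span_singleton_mul'.mp hy
    have := mem_dual.mp hw y' hy'
    rwa [show c⁻¹ * w * (c * y') = (c⁻¹ * c) * (w * y') by ring, inv_mul_cancel₀ hc, one_mul]

lemma vOp_span_singleton_mul {c : K} (hc : c ≠ 0) (X : Submodule A K) :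
    vOp (Submodule.span A {c} * X) = Submodule.span A {c} * vOp X := by
  show dual (dual _) = _
  rw [dual_span_singleton_mul hc X, dual_span_singleton_mul (inv_ne_zero hc) (dual X), inv_inv]
  rfl

end AuxGeneric
section AuxGeneric2

variable {A : Type*} [CommRing A] {K : Type*} [Field K] [Algebra A K]

lemma mul_span_le_one {z : K} {s : Set K}
    (h : ∀ τ ∈ s, z * τ ∈ (1 : Submodule A K)) : z ∈ dual (Submodule.span A s) := by
  refine mem_dual.mpr fun y hy => ?_
  induction hy using Submodule.span_induction with
  | mem τ hτ => exact h τ hτ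
  | zero => simpa using zero_mem (1 : Submodule A K)
  | add a b _ _ ha hb => rw [mul_add]; exact add_mem ha hb
  | smul r a _ ha => rw [mul_smul_comm]; exact Submodule.smul_mem _ r ha

lemma pow_mono_submodule {X Y : Submodule A K} (h : X ≤ Y) :
    ∀ n : ℕ, X ^ (n + 1) ≤ Y ^ (n + 1)
  | 0 => by simpa [pow_one] using h
  | n + 1 => by
    rw [pow_succ, pow_succ]
    exact mul_le_mul' (pow_mono_submodule h n) h

end AuxGeneric2
section AuxR

variable {R : Type*} [CommRing R] [IsDomain R]
variable {K : Type*} [Field K] [Algebra R K] [IsFractionRing R K]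

lemma FR_inj : Function.Injective (algebraMap R K) := IsFractionRing.injective R K

lemma mem_toK {I : Ideal R} {z : K} : z ∈ toK R K I ↔ ∃ a ∈ I, algebraMap R K a = z := by
  constructor
  · rintro ⟨a, ha, rfl⟩
    exact ⟨a, ha, rfl⟩
  · rintro ⟨a, ha, rfl⟩
    exact ⟨a, ha, rfl⟩

lemma FR_mem_toK {I : Ideal R} {a : R} : algebraMap R K a ∈ toK R K I ↔ a ∈ I := by
  constructor
  · intro h
    obtain ⟨b, hb, he⟩ := mem_toK.mp h
    rwa [← FR_inj he]
  · intro h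
    exact mem_toK.mpr ⟨a, h, rfl⟩

lemma toK_le_one (I : Ideal R) : toK R K I ≤ 1 := by
  rintro z hz
  obtain ⟨a, _, rfl⟩ := mem_toK.mp hz
  exact Submodule.mem_one.mpr ⟨a, rfl⟩

lemma toK_mono {I J : Ideal R} (h : I ≤ J) : toK R K I ≤ toK R K J :=
  Submodule.map_mono h

lemma FR_eq_zero {a : R} (h : algebraMap R K a = 0) : a = 0 :=
  (map_eq_zero_iff (algebraMap R K) FR_inj).mp h

lemma FR_ne_zero {a : R} (h : a ≠ 0) : algebraMap R K a ≠ 0 := fun he => h (FR_eq_zero he)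

lemma toK_ne_bot {I : Ideal R} (h : I ≠ ⊥) : toK R K I ≠ ⊥ := by
  obtain ⟨a, ha, ha0⟩ := (Submodule.ne_bot_iff _).mp h
  intro hb
  have : algebraMap R K a ∈ toK R K I := FR_mem_toK.mpr ha
  rw [hb, Submodule.mem_bot] at this
  exact ha0 (FR_eq_zero this)

lemma toK_fg {I : Ideal R} (h : I.FG) : (toK R K I).FG := Submodule.FG.map _ h

lemma toK_mul (I J : Ideal R) :
    toK R K (I * J) = toK R K I * toK R K J := by
  refine le_antisymm ?_ (Submodule.mul_le.mpr fun x hx y hy => ?_)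
  · rintro z hz
    obtain ⟨c, hc, rfl⟩ := mem_toK.mp hz
    refine Submodule.mul_induction_on hc (fun a ha b hb => ?_) (fun a b ha hb => ?_)
    · rw [map_mul]
      exact Submodule.mul_mem_mul (FR_mem_toK.mpr ha) (FR_mem_toK.mpr hb)
    · rw [map_add]; exact add_mem ha hb
  · obtain ⟨a, ha, rfl⟩ := mem_toK.mp hx
    obtain ⟨b, hb, rfl⟩ := mem_toK.mp hy
    rw [← map_mul]
    exact FR_mem_toK.mpr (Ideal.mul_mem_mul ha hb)

lemma toK_pow (I : Ideal R) : ∀ n : ℕ, toK R K (I ^ (n + 1)) = (toK R K I) ^ (n + 1)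
  | 0 => by rw [pow_one, pow_one]
  | n + 1 => by rw [pow_succ, toK_mul, toK_pow I n, ← pow_succ]

/-- The conductor ideal `(R :_R x) = {r : R | x·r ∈ R}`. -/
def condI (x : K) : Ideal R where
  carrier := {r : R | ∃ c : R, x * algebraMap R K r = algebraMap R K c}
  add_mem' := by
    rintro r s ⟨c, hc⟩ ⟨d, hd⟩
    exact ⟨c + d, by rw [map_add, map_add, mul_add, hc, hd]⟩
  zero_mem' := ⟨0, by simp⟩
  smul_mem' := by
    rintro t r ⟨c, hc⟩
    refine ⟨t * c, ?_⟩
    rw [smul_eq_mul, map_mul, map_mul, show x * (algebraMap R K t * algebraMap R K r)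
      = algebraMap R K t * (x * algebraMap R K r) by ring, hc]

lemma mem_condI {x : K} {r : R} :
    r ∈ condI x ↔ ∃ c : R, x * algebraMap R K r = algebraMap R K c := Iff.rfl

lemma condI_pow_mono {x : K} {q : R} {m : ℕ} (h : q ^ m ∈ condI x) (k : ℕ) :
    q ^ (m + k) ∈ condI x := by
  obtain ⟨c, hc⟩ := h
  exact ⟨c * q ^ k, by rw [pow_add, map_mul, map_mul, ← mul_assoc, hc, map_pow]⟩

lemma loc_iff {P : Ideal R} {x : K} : x ∈ loc K P ↔ ∃ s, s ∉ P ∧ s ∈ condI x := by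
  constructor
  · rintro ⟨a, s, h1, h2⟩
    exact ⟨s, h1, a, h2⟩
  · rintro ⟨s, h1, a, h2⟩
    exact ⟨a, s, h1, h2⟩

lemma kap_iff {P : Ideal R} {x : K} :
    x ∈ (kaplansky K P : Set K) ↔ ∀ p ∈ P, ∃ n : ℕ, 0 < n ∧ p ^ n ∈ condI x := by
  constructor
  · intro h p hp
    obtain ⟨n, hn, r, hr⟩ := h p hp
    exact ⟨n, hn, r, by rwa [map_pow]⟩
  · intro h p hp
    obtain ⟨n, hn, r, hr⟩ := h p hp
    exact ⟨n, hn, r, by rwa [map_pow] at hr⟩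

lemma nag_iff {P : Ideal R} {x : K} :
    x ∈ (nagata K P : Set K) ↔ ∃ n : ℕ, P ^ (n + 1) ≤ condI x := by
  constructor
  · rintro ⟨n, hn⟩
    exact ⟨n, fun y hy => hn y hy⟩
  · rintro ⟨n, hn⟩
    exact ⟨n, fun y hy => hn hy⟩

lemma mem_one_of_mem_condI {x : K} (h : (1 : R) ∈ condI x) : x ∈ (1 : Submodule R K) := by
  obtain ⟨c, hc⟩ := h
  rw [map_one, mul_one] at hc
  exact Submodule.mem_one.mpr ⟨c, hc.symm⟩

lemma mem_condI_of_mem_one {x : K} (h : x ∈ (1 : Submodule R K)) (r : R) : r ∈ condI x := by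
  obtain ⟨c, hc⟩ := Submodule.mem_one.mp h
  exact ⟨c * r, by rw [map_mul, ← hc]⟩

lemma one_mem_loc {P : Ideal R} (hP : P ≠ ⊤) {x : K} (h : x ∈ (1 : Submodule R K)) :
    x ∈ loc K P := by
  obtain ⟨c, hc⟩ := Submodule.mem_one.mp h
  exact loc_iff.mpr ⟨1, fun h1 => hP (Ideal.eq_top_of_isUnit_mem _ h1 isUnit_one),
    mem_condI_of_mem_one h 1⟩

/-- Presentation of the conductor: if `x = a/b` then `(R : x) = b·(a,b)⁻¹` inside `K`. -/
lemma condI_presentation {x : K} (hx : x ≠ 0) :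
    ∃ a b : R, a ≠ 0 ∧ b ≠ 0 ∧ x * algebraMap R K b = algebraMap R K a ∧
      toK R K (condI x) =
        Submodule.span R {algebraMap R K b} * dual (toK R K (Ideal.span {a, b})) := by
  obtain ⟨⟨a, b⟩, hab⟩ := IsLocalization.surj (nonZeroDivisors R) x
  simp only at hab
  have hb0 : (b : R) ≠ 0 := nonZeroDivisors.ne_zero b.2
  have hFb : algebraMap R K (b : R) ≠ 0 := FR_ne_zero hb0
  have ha0 : a ≠ 0 := by
    intro h
    rw [h, map_zero] at hab
    rcases mul_eq_zero.mp hab with h' | h'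
    · exact hx h'
    · exact hFb h'
  have hdu : ∀ u : K, u ∈ dual (toK R K (Ideal.span {a, (b : R)})) ↔
      (u * algebraMap R K a ∈ (1 : Submodule R K) ∧
        u * algebraMap R K (b : R) ∈ (1 : Submodule R K)) := by
    intro u
    constructor
    · intro hu
      exact ⟨mem_dual.mp hu _ (FR_mem_toK.mpr (Ideal.subset_span (by simp))),
        mem_dual.mp hu _ (FR_mem_toK.mpr (Ideal.subset_span (by simp)))⟩
    · rintro ⟨h1, h2⟩
      refine mem_dual.mpr fun y hy => ?_
      obtain ⟨c, hc, rfl⟩ := mem_toK.mp hy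
      obtain ⟨α, β, hαβ⟩ := Ideal.mem_span_pair.mp hc
      rw [← hαβ, map_add, map_mul, map_mul, mul_add]
      refine add_mem ?_ ?_
      · rw [show u * (algebraMap R K α * algebraMap R K a)
          = algebraMap R K α * (u * algebraMap R K a) by ring]
        exact one_mul_mem (Submodule.mem_one.mpr ⟨α, rfl⟩) h1
      · rw [show u * (algebraMap R K β * algebraMap R K (b:R))
          = algebraMap R K β * (u * algebraMap R K (b:R)) by ring]
        exact one_mul_mem (Submodule.mem_one.mpr ⟨β, rfl⟩) h2
  refine ⟨a, b, ha0, hb0, hab, le_antisymm ?_ ?_⟩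
  · rintro z hz
    obtain ⟨r, hr, rfl⟩ := mem_toK.mp hz
    obtain ⟨c, hc⟩ := hr
    refine mem_span_singleton_mul'.mpr ⟨algebraMap R K r / algebraMap R K (b:R), ?_, by
      field_simp⟩
    refine (hdu _).mpr ⟨?_, ?_⟩
    · rw [show algebraMap R K r / algebraMap R K (b:R) * algebraMap R K a
        = (x * algebraMap R K r) * (algebraMap R K (b:R) / algebraMap R K (b:R)) by
          rw [← hab]; ring, div_self hFb, mul_one, hc]
      exact Submodule.mem_one.mpr ⟨c, rfl⟩
    · rw [div_mul_cancel₀ _ hFb]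
      exact Submodule.mem_one.mpr ⟨r, rfl⟩
  · rintro z hz
    obtain ⟨w, hw, rfl⟩ := mem_span_singleton_mul'.mp hz
    obtain ⟨h1, h2⟩ := (hdu w).mp hw
    obtain ⟨r, hr⟩ := Submodule.mem_one.mp h2
    have hzr : algebraMap R K (b:R) * w = algebraMap R K r := by rw [hr]; ring
    rw [hzr]
    refine FR_mem_toK.mpr ?_
    obtain ⟨c, hc⟩ := Submodule.mem_one.mp h1
    refine ⟨c, ?_⟩
    rw [← hzr, hc,
      show x * (algebraMap R K (b:R) * w) = (x * algebraMap R K (b:R)) * w by ring, hab]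
    ring

lemma condI_divisorial {x : K} (hx : x ≠ 0) :
    vOp (toK R K (condI x)) = toK R K (condI x) := by
  obtain ⟨a, b, _, hb0, _, hpres⟩ := condI_presentation (R := R) (K := K) hx
  have hFb : algebraMap R K b ≠ 0 := FR_ne_zero hb0
  rw [hpres, vOp_span_singleton_mul hFb, vOp_dual]

lemma condI_isT {x : K} (hx : x ≠ 0) : IsTIdeal K (condI x : Ideal R) := by
  refine le_antisymm ?_ (le_tOp _)
  calc tOp (toK R K (condI x)) ≤ vOp (toK R K (condI x)) := tOp_le_vOp _
  _ = toK R K (condI x) := condI_divisorial hx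

lemma condI_tinv (hR : IsPVMD R K) {x : K} (hx : x ≠ 0) :
    IsTInvertible K (condI x : Ideal R) := by
  obtain ⟨a, b, ha0, hb0, hab, hpres⟩ := condI_presentation (R := R) (K := K) hx
  have hFb : algebraMap R K b ≠ 0 := FR_ne_zero hb0
  set H := toK R K (Ideal.span {a, b}) with hH
  have hspanne : Ideal.span {a, b} ≠ (⊥ : Ideal R) := by
    intro h
    have : b ∈ Ideal.span {a, b} := Ideal.subset_span (by simp)
    rw [h] at this
    exact hb0 (by simpa using this)

  have hfg : (Ideal.span {a, b} : Ideal R).FG := ⟨{a, b}, by simp⟩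
  have htinvH := hR (Ideal.span {a, b}) hspanne hfg
  have hle1 : toK R K (condI x) * dual (toK R K (condI x)) ≤ 1 :=
    Submodule.mul_le.mpr fun z hz u hu => by
      rw [mul_comm]; exact mem_dual.mp hu z hz
  have hge : H * dual H ≤ toK R K (condI x) * dual (toK R K (condI x)) := by
    refine Submodule.mul_le.mpr fun h hh u hu => ?_
    have h1 : algebraMap R K b * u ∈ toK R K (condI x) := by
      rw [hpres]
      exact mem_span_singleton_mul'.mpr ⟨u, hu, rfl⟩
    have h2 : h * (algebraMap R K b)⁻¹ ∈ dual (toK R K (condI x)) := by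
      refine mem_dual.mpr fun z hz => ?_
      rw [hpres] at hz
      obtain ⟨w, hw, rfl⟩ := mem_span_singleton_mul'.mp hz
      rw [show h * (algebraMap R K b)⁻¹ * (algebraMap R K b * w)
        = ((algebraMap R K b)⁻¹ * algebraMap R K b) * (h * w) by ring,
        inv_mul_cancel₀ hFb, one_mul, mul_comm]
      exact mem_dual.mp hw h hh
    have heq : h * u = (algebraMap R K b * u) * (h * (algebraMap R K b)⁻¹) := by
      field_simp
    rw [heq]
    exact Submodule.mul_mem_mul h1 h2
  refine le_antisymm (tOp_le_one hle1) ?_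
  calc (1 : Submodule R K) = tOp (H * dual H) := htinvH.symm
  _ ≤ tOp (toK R K (condI x) * dual (toK R K (condI x))) := tOp_mono hge

end AuxR
section AuxZorn

variable {R : Type*} [CommRing R] [IsDomain R]
variable {K : Type*} [Field K] [Algebra R K] [IsFractionRing R K]

/-- The `t`-closure of an ideal. -/
def tCl (K : Type*) [Field K] [Algebra R K] [IsFractionRing R K] (J : Ideal R) : Ideal R where
  carrier := {r : R | algebraMap R K r ∈ tOp (toK R K J)}
  add_mem' := fun h1 h2 => by simpa [map_add] using add_mem h1 h2
  zero_mem' := by simpa [map_zero] using zero_mem (tOp (toK R K J))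
  smul_mem' := fun c r h => by
    show algebraMap R K (c • r) ∈ tOp (toK R K J)
    rw [smul_eq_mul, map_mul, ← Algebra.smul_def]
    exact Submodule.smul_mem _ c h

lemma mem_tCl {J : Ideal R} {r : R} : r ∈ tCl K J ↔ algebraMap R K r ∈ tOp (toK R K J) :=
  Iff.rfl

lemma le_tCl (J : Ideal R) : J ≤ tCl K J := fun r hr =>
  mem_tCl.mpr (le_tOp _ (FR_mem_toK.mpr hr))

lemma toK_tCl (J : Ideal R) : toK R K (tCl K J) = tOp (toK R K J) := by
  refine le_antisymm ?_ ?_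
  · rintro z hz
    obtain ⟨r, hr, rfl⟩ := mem_toK.mp hz
    exact mem_tCl.mp hr
  · rintro z hz
    have hz1 : z ∈ (1 : Submodule R K) := tOp_le_one (toK_le_one J) hz
    obtain ⟨r, rfl⟩ := Submodule.mem_one.mp hz1
    exact FR_mem_toK.mpr (mem_tCl.mpr hz)

lemma tCl_isT (J : Ideal R) : IsTIdeal K (tCl K J) := by
  show tOp (toK R K (tCl K J)) = toK R K (tCl K J)
  rw [toK_tCl, tOp_idem]

lemma tCl_mono {I J : Ideal R} (h : I ≤ J) : tCl K I ≤ tCl (R := R) K J := fun r hr =>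
  mem_tCl.mpr (tOp_mono (toK_mono h) (mem_tCl.mp hr))

/-- Zorn: a `t`-ideal avoiding all powers of `p` extends to a prime `t`-ideal avoiding
all powers of `p`. -/
lemma zornt (I : Ideal R) (hI : IsTIdeal K I) (p : R) (hp : ∀ n : ℕ, p ^ n ∉ I) :
    ∃ M : Ideal R, I ≤ M ∧ M.IsPrime ∧ IsTIdeal K M ∧ ∀ n : ℕ, p ^ n ∉ M := by
  classical
  set S : Set (Ideal R) := {J | I ≤ J ∧ IsTIdeal K J ∧ ∀ n : ℕ, p ^ n ∉ J} with hS
  have hIS : I ∈ S := ⟨le_rfl, hI, hp⟩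
  have hzorn := zorn_le_nonempty₀ S ?_ I hIS
  · obtain ⟨M, hIleM, hMmax⟩ := hzorn
    obtain ⟨hIM, hMt, hMp⟩ := hMmax.1
    have hmax : ∀ J : Ideal R, J ∈ S → M ≤ J → J = M :=
      fun J hJ hMJ => le_antisymm (hMmax.2 hJ hMJ) hMJ
    have hMne : M ≠ ⊤ := fun h => hMp 0 (by rw [h, pow_zero]; trivial)
    refine ⟨M, hIM, ⟨hMne, ?_⟩, hMt, hMp⟩
    intro a b hab
    by_contra hcon
    push_neg at hcon
    obtain ⟨ha, hb⟩ := hcon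
    have key : ∀ c : R, c ∉ M → ∃ m : ℕ, p ^ m ∈ tCl K (M ⊔ Ideal.span {c}) := by
      intro c hc
      by_contra hno
      push_neg at hno
      have hmem : M ≤ tCl K (M ⊔ Ideal.span {c}) := le_sup_left.trans (le_tCl _)
      have : tCl K (M ⊔ Ideal.span {c}) = M :=
        hmax _ ⟨hIM.trans hmem, tCl_isT _, hno⟩ hmem
      exact hc (this ▸ (le_tCl _ (Submodule.mem_sup_right (Ideal.subset_span rfl))))
    obtain ⟨m, hm⟩ := key a ha
    obtain ⟨k, hk⟩ := key b hb
    have hprod : (M ⊔ Ideal.span {a}) * (M ⊔ Ideal.span {b}) ≤ M := by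
      refine Ideal.mul_le.mpr fun c hcm d hdm => ?_
      obtain ⟨m1, hm1, c2, hc2, rfl⟩ := Submodule.mem_sup.mp hcm
      obtain ⟨m2, hm2, d2, hd2, rfl⟩ := Submodule.mem_sup.mp hdm
      obtain ⟨r, hr⟩ := Ideal.mem_span_singleton'.mp hc2
      obtain ⟨s, hs⟩ := Ideal.mem_span_singleton'.mp hd2
      have : (m1 + c2) * (m2 + d2) = m1 * (m2 + d2) + c2 * m2 + (r * s) * (a * b) := by
        rw [← hr, ← hs]; ring
      rw [this]
      exact add_mem (add_mem (M.mul_mem_right _ hm1) (M.mul_mem_left _ hm2))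
        (M.mul_mem_left _ hab)
    have hfin : algebraMap R K (p ^ (m + k)) ∈ toK R K M := by
      have h1 : algebraMap R K (p ^ m) * algebraMap R K (p ^ k) ∈
          tOp (toK R K (M ⊔ Ideal.span {a})) * tOp (toK R K (M ⊔ Ideal.span {b})) :=
        Submodule.mul_mem_mul (mem_tCl.mp hm) (mem_tCl.mp hk)
      have h2 := tOp_mul_le (toK R K (M ⊔ Ideal.span {a})) (toK R K (M ⊔ Ideal.span {b})) h1
      rw [← toK_mul] at h2
      have h3 := tOp_mono (toK_mono hprod) h2
      rw [hMt] at h3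
      rwa [pow_add, map_mul]
    exact hMp (m + k) (FR_mem_toK.mp hfin)
  · -- chains have upper bounds
    intro c hcS hchain y hy
    refine ⟨sSup c, ?_, fun z hz => le_sSup hz⟩
    have hdir : DirectedOn (· ≤ ·) c := hchain.directedOn
    have hmem : ∀ r : R, r ∈ sSup c → ∃ J ∈ c, r ∈ J := by
      intro r hr
      exact (Submodule.mem_sSup_of_directed ⟨y, hy⟩ hdir).mp hr
    refine ⟨(hcS hy).1.trans (le_sSup hy), ?_, fun n hn => ?_⟩
    · -- sSup of a chain of t-ideals is a t-ideal
      have claim : ∀ s : Finset K, (↑s : Set K) ⊆ (toK R K (sSup c) : Set K) →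
          ∃ J ∈ c, (↑s : Set K) ⊆ (toK R K J : Set K) := by
        classical
        intro s
        induction s using Finset.induction with
        | empty => exact fun _ => ⟨y, hy, by simp⟩
        | insert _ _ hgs ih =>
          rename_i g s'
          intro hsub
          obtain ⟨J1, hJ1c, hJ1⟩ := ih (fun z hz => hsub (by
            rw [Finset.coe_insert]; exact Set.mem_insert_of_mem _ hz))
          have hg : g ∈ toK R K (sSup c) := hsub (by rw [Finset.coe_insert]; exact Set.mem_insert _ _)
          obtain ⟨r, hr, rfl⟩ := mem_toK.mp hg
          obtain ⟨J2, hJ2c, hJ2⟩ := hmem r hr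
          obtain ⟨J3, hJ3c, h13, h23⟩ := hdir J1 hJ1c J2 hJ2c
          refine ⟨J3, hJ3c, ?_⟩
          rw [Finset.coe_insert]
          rintro z (rfl | hz)
          · exact toK_mono h23 (FR_mem_toK.mpr hJ2)
          · exact toK_mono h13 (hJ1 hz)
      refine le_antisymm (tOp_le fun J' hJ'b hJ'f hJ'l => ?_) (le_tOp _)
      obtain ⟨s, rfl⟩ := hJ'f
      obtain ⟨J, hJc, hJ⟩ := claim s ((Submodule.span_le.mp hJ'l |>.trans (fun z hz => hz)))
      calc vOp (Submodule.span R (↑s : Set K)) ≤ tOp (toK R K J) :=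
            vOp_le_tOp hJ'b ⟨s, rfl⟩ (Submodule.span_le.mpr hJ)
      _ = toK R K J := (hcS hJc).2.1
      _ ≤ toK R K (sSup c) := toK_mono (le_sSup hJc)
    · obtain ⟨J, hJc, hJm⟩ := hmem _ hn
      exact (hcS hJc).2.2 n hJm

end AuxZorn
section AuxExtract

variable {R : Type*} [CommRing R] [IsDomain R]
variable {K : Type*} [Field K] [Algebra R K] [IsFractionRing R K]

/-- If an element of `K` is locally in `R` at every prime `t`-ideal, it is in `R`. -/
lemma glob {y : K}
    (h : ∀ M : Ideal R, M.IsPrime → IsTIdeal K M → M ≠ ⊤ → y ∈ loc K M) :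
    y ∈ (1 : Submodule R K) := by
  by_contra hy
  have hy0 : y ≠ 0 := fun h0 => hy (h0 ▸ zero_mem _)
  have hnt : ∀ n : ℕ, (1 : R) ^ n ∉ condI y := by
    intro n hn
    rw [one_pow] at hn
    exact hy (mem_one_of_mem_condI hn)
  obtain ⟨M, hle, hprime, ht, hpow⟩ := zornt (condI y) (condI_isT hy0) 1 hnt
  have hMne : M ≠ ⊤ := fun h => (hpow 0) (by rw [h, pow_zero]; trivial)
  obtain ⟨s, hsM, hsc⟩ := loc_iff.mp (h M hprime ht hMne)
  exact hsM (hle hsc)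

/-- From `t`-invertibility, extract a "unit" pair at any prime `t`-ideal. -/
lemma extract_tinv {I Q : Ideal R} (hI : IsTInvertible K I) (hQp : Q.IsPrime)
    (hQt : IsTIdeal K Q) :
    ∃ a ∈ I, ∃ u ∈ dual (toK R K I), ∃ t : R, t ∉ Q ∧
      u * algebraMap R K a = algebraMap R K t := by
  by_contra hcon
  push_neg at hcon
  have hle : toK R K I * dual (toK R K I) ≤ toK R K Q := by
    refine Submodule.mul_le.mpr fun z hz u hu => ?_
    obtain ⟨a, ha, rfl⟩ := mem_toK.mp hz
    have h1 : u * algebraMap R K a ∈ (1 : Submodule R K) :=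
      mem_dual.mp hu _ (FR_mem_toK.mpr ha)
    obtain ⟨t, ht⟩ := Submodule.mem_one.mp h1
    have := hcon a ha u hu t
    rw [mul_comm, ← ht]
    exact FR_mem_toK.mpr (not_not.mp fun hq => (this hq) ht.symm)
  have h2 : (1 : Submodule R K) ≤ toK R K Q := by
    calc (1 : Submodule R K) = tOp (toK R K I * dual (toK R K I)) := hI.symm
    _ ≤ tOp (toK R K Q) := tOp_mono hle
    _ = toK R K Q := hQt
  have : (1 : R) ∈ Q := FR_mem_toK (K := K).mp (by simpa using h2 one_mem_one)
  exact hQp.ne_top (Ideal.eq_top_of_isUnit_mem _ this isUnit_one)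

/-- Elements of `I⁻¹` lie in the Kaplansky transform of `√I`. -/
lemma dual_toK_sub_kap {I P : Ideal R} (hrad : I.radical = P) {u : K}
    (hu : u ∈ dual (toK R K I)) : u ∈ (kaplansky K P : Set K) := by
  refine kap_iff.mpr fun p hp => ?_
  have : p ∈ I.radical := hrad.symm ▸ hp
  obtain ⟨m, hm⟩ := this
  have h1 : u * algebraMap R K (p ^ m) ∈ (1 : Submodule R K) :=
    mem_dual.mp hu _ (FR_mem_toK.mpr hm)
  obtain ⟨c, hc⟩ := Submodule.mem_one.mp h1
  refine ⟨m + 1, Nat.succ_pos m, c * p, ?_⟩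
  rw [pow_succ, map_mul, map_mul, ← mul_assoc, hc, map_pow]

/-- Decompose a member of a product of submodules into a finite set of pair products. -/
lemma mem_mul_finset {X Y : Submodule R K} {g : K} (hg : g ∈ X * Y) :
    ∃ T : Finset K, (∀ τ ∈ T, ∃ x ∈ X, ∃ y ∈ Y, τ = x * y) ∧
      g ∈ Submodule.span R (↑T : Set K) := by
  classical
  refine Submodule.mul_induction_on hg ?_ ?_
  · intro x hx y hy
    refine ⟨{x * y}, fun τ hτ => ?_, Submodule.subset_span (by simp)⟩
    rw [Finset.mem_singleton] at hτ
    exact ⟨x, hx, y, hy, hτ⟩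
  · rintro g1 g2 ⟨T1, hT1, hg1⟩ ⟨T2, hT2, hg2⟩
    refine ⟨T1 ∪ T2, fun τ hτ => ?_, ?_⟩
    · rcases Finset.mem_union.mp hτ with h | h
      · exact hT1 τ h
      · exact hT2 τ h
    · rw [Finset.coe_union]
      exact add_mem (Submodule.span_mono Set.subset_union_left hg1)
        (Submodule.span_mono Set.subset_union_right hg2)

/-- Finite extraction from `t`-invertibility: there is a finite family of products
`aᵢ·uᵢ ∈ I·I⁻¹` whose span is `v`-dense. -/
lemma tinv_finite {I : Ideal R} (hI : IsTInvertible K I) (hne : I ≠ ⊥) :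
    ∃ T : Finset K,
      (∀ τ ∈ T, ∃ a ∈ I, ∃ u ∈ dual (toK R K I), τ = algebraMap R K a * u) ∧
      (1 : K) ∈ vOp (Submodule.span R (↑T : Set K)) := by
  classical
  have h1 : (1 : K) ∈ tOp (toK R K I * dual (toK R K I)) := hI ▸ one_mem_one
  have hprodne : toK R K I * dual (toK R K I) ≠ ⊥ := by
    obtain ⟨a0, ha0, ha00⟩ := (Submodule.ne_bot_iff _).mp hne
    have hmem : algebraMap R K a0 * 1 ∈ toK R K I * dual (toK R K I) :=
      Submodule.mul_mem_mul (FR_mem_toK.mpr ha0) (one_le_dual (toK_le_one I) one_mem_one)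
    intro hb
    rw [hb, Submodule.mem_bot, mul_one] at hmem
    exact FR_ne_zero ha00 hmem
  obtain ⟨J, hJb, hJf, hJl, hJm⟩ := mem_tOp hprodne h1
  obtain ⟨s, rfl⟩ := hJf
  -- replace the generators by pair products
  have claim : ∀ s' : Finset K, (↑s' : Set K) ⊆ (toK R K I * dual (toK R K I) : Set K) →
      ∃ T : Finset K, (∀ τ ∈ T, ∃ a ∈ I, ∃ u ∈ dual (toK R K I), τ = algebraMap R K a * u) ∧
        (↑s' : Set K) ⊆ (Submodule.span R (↑T : Set K) : Set K) := by
    intro s'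
    induction s' using Finset.induction with
    | empty => exact fun _ => ⟨∅, by simp, by simp⟩
    | insert _ _ hgs ih =>
      rename_i g s''
      intro hsub
      obtain ⟨T1, hT1, hT1s⟩ := ih (fun z hz => hsub (by
        rw [Finset.coe_insert]; exact Set.mem_insert_of_mem _ hz))
      have hg : g ∈ toK R K I * dual (toK R K I) :=
        hsub (by rw [Finset.coe_insert]; exact Set.mem_insert _ _)
      obtain ⟨T2, hT2, hT2g⟩ := mem_mul_finset hg
      refine ⟨T1 ∪ T2, fun τ hτ => ?_, ?_⟩
      · rcases Finset.mem_union.mp hτ with h | h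
        · exact hT1 τ h
        · obtain ⟨x, hx, y, hy, rfl⟩ := hT2 τ h
          obtain ⟨a, ha, rfl⟩ := mem_toK.mp hx
          exact ⟨a, ha, y, hy, rfl⟩
      · rw [Finset.coe_insert, Finset.coe_union]
        rintro z (rfl | hz)
        · exact Submodule.span_mono Set.subset_union_right hT2g
        · exact Submodule.span_mono Set.subset_union_left (hT1s hz)
  obtain ⟨T, hT, hsub⟩ := claim s (fun z hz => hJl (Submodule.subset_span hz))
  refine ⟨T, hT, ?_⟩
  exact vOp_mono (Submodule.span_le.mpr hsub) hJm

end AuxExtract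
section AuxMain

variable {R : Type*} [CommRing R] [IsDomain R]
variable {K : Type*} [Field K] [Algebra R K] [IsFractionRing R K]

lemma locKap_sub_nagata (hR : IsPVMD R K) {P : Ideal R} (hP : P.IsPrime)
    {x : K} (hloc : x ∈ loc K P) (hkap : x ∈ (kaplansky K P : Set K)) :
    x ∈ (nagata K P : Set K) := by
  rcases eq_or_ne x 0 with rfl | hx0
  · exact nag_iff.mpr ⟨0, fun y _ => ⟨0, by simp⟩⟩
  obtain ⟨s, hsP, hsC⟩ := loc_iff.mp hloc
  have hs0 : s ≠ 0 := fun h => hsP (h ▸ P.zero_mem)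
  refine nag_iff.mpr ⟨0, ?_⟩
  rw [zero_add, pow_one]
  intro p hp
  have key : algebraMap R K p ∈ toK R K (condI x) := by
    rw [← condI_divisorial hx0]
    show algebraMap R K p ∈ dual (dual (toK R K (condI x)))
    refine mem_dual.mpr fun u hu => ?_
    refine glob fun M hMp hMt hMne => ?_
    by_cases hsM : s ∈ M
    · by_cases hPM : P ≤ M
      · -- the hard case: use comparability from t-invertibility of (s, p)
        have hFne : Ideal.span {s, p} ≠ (⊥ : Ideal R) := by
          intro h
          have : s ∈ Ideal.span {s, p} := Ideal.subset_span (by simp)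
          rw [h] at this
          exact hs0 (by simpa using this)
        have hFtinv := hR (Ideal.span {s, p}) hFne ⟨{s, p}, by simp⟩
        obtain ⟨h, hh, w, hw, t, htM, hweq⟩ := extract_tinv hFtinv hMp hMt
        obtain ⟨q1, hq1⟩ := Submodule.mem_one.mp
          (mem_dual.mp hw _ (FR_mem_toK.mpr (Ideal.subset_span (show s ∈ _ by simp))))
        obtain ⟨q2, hq2⟩ := Submodule.mem_one.mp
          (mem_dual.mp hw _ (FR_mem_toK.mpr (Ideal.subset_span (show p ∈ _ by simp))))
        obtain ⟨α, β, hαβ⟩ := Ideal.mem_span_pair.mp hh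
        have ht_eq : t = α * q1 + β * q2 := by
          apply FR_inj (K := K)
          rw [← hweq, ← hαβ, map_add, map_mul, map_mul, map_add, map_mul, map_mul, hq1, hq2]
          ring
        have hq12 : q1 ∉ M ∨ q2 ∉ M := by
          by_contra hcon
          push_neg at hcon
          exact htM (ht_eq ▸ add_mem (M.mul_mem_left α hcon.1) (M.mul_mem_left β hcon.2))
        obtain ⟨c, hc⟩ := Submodule.mem_one.mp (mem_dual.mp hu _ (FR_mem_toK.mpr hsC))
        rcases hq12 with hq1M | hq2M
        · -- q1 ∉ M : here s divides p locally at M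
          refine loc_iff.mpr ⟨q1, hq1M, c * q2, ?_⟩
          rw [map_mul, hq1, hc, hq2]
          ring
        · -- q2 ∉ M : then s ∈ P, contradiction
          exfalso
          have hsq : s * q2 = p * q1 := by
            apply FR_inj (K := K)
            rw [map_mul, map_mul, hq1, hq2]
            ring
          have : s * q2 ∈ P := hsq ▸ P.mul_mem_right q1 hp
          rcases hP.mem_or_mem this with h' | h'
          · exact hsP h'
          · exact hq2M (hPM h')
      · -- P ⊄ M : some p' ∈ P is a unit at M
        obtain ⟨p', hp'P, hp'M⟩ := SetLike.not_le_iff_exists.mp hPM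
        obtain ⟨n, hn0, hnC⟩ := kap_iff.mp hkap p' hp'P
        obtain ⟨c, hc⟩ := Submodule.mem_one.mp (mem_dual.mp hu _ (FR_mem_toK.mpr hnC))
        refine loc_iff.mpr ⟨p' ^ n, fun h => hp'M (hMp.mem_of_pow_mem n h), p * c, ?_⟩
        rw [map_mul, hc]
        ring
    · -- s ∉ M
      obtain ⟨c, hc⟩ := Submodule.mem_one.mp (mem_dual.mp hu _ (FR_mem_toK.mpr hsC))
      refine loc_iff.mpr ⟨s, hsM, p * c, ?_⟩
      rw [map_mul, hc]
      ring
  obtain ⟨c, hc⟩ := FR_mem_toK.mp key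
  exact ⟨c, hc⟩

end AuxMain
section AuxS34

variable {R : Type*} [CommRing R] [IsDomain R]
variable {K : Type*} [Field K] [Algebra R K] [IsFractionRing R K]

lemma nagata_sub_kap {P : Ideal R} {x : K} (hx : x ∈ (nagata K P : Set K)) :
    x ∈ (kaplansky K P : Set K) := by
  obtain ⟨n, hn⟩ := nag_iff.mp hx
  refine kap_iff.mpr fun p hp => ⟨n + 1, Nat.succ_pos n, hn (Ideal.pow_mem_pow hp (n + 1))⟩

lemma zero_mem_loc {P : Ideal R} (hP : P ≠ ⊤) : (0 : K) ∈ loc K P :=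
  one_mem_loc hP (zero_mem _)

/-- If some element of `T(P)` is not in `R_P`, then `Ω(P) ⊆ T(P)`. -/
lemma kap_sub_nagata_of_exists (hR : IsPVMD R K) {P : Ideal R} (hbot : P ≠ ⊥)
    (hP : P.IsPrime) {u : K} (hu : u ∈ (nagata K P : Set K)) (hul : u ∉ loc K P) :
    (kaplansky K P : Set K) ⊆ (nagata K P : Set K) := by
  classical
  have hu0 : u ≠ 0 := fun h => hul (h ▸ zero_mem_loc hP.ne_top)
  obtain ⟨n, hn⟩ := nag_iff.mp hu
  have hCuP : condI u ≤ P := by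
    intro r hr
    by_contra hrP
    exact hul (loc_iff.mpr ⟨r, hrP, hr⟩)
  have hCune : (condI u : Ideal R) ≠ ⊥ := by
    obtain ⟨p0, hp0, hp00⟩ := (Submodule.ne_bot_iff _).mp hbot
    intro hb
    have h1 : p0 ^ (n + 1) ∈ condI u := hn (Ideal.pow_mem_pow hp0 (n + 1))
    rw [hb, Submodule.mem_bot] at h1
    exact pow_ne_zero (n + 1) hp00 h1
  obtain ⟨T, hT, hTv⟩ := tinv_finite (condI_tinv hR hu0) hCune
  set F : K → R := fun τ =>
    if h : ∃ a ∈ condI u, ∃ w ∈ dual (toK R K (condI u)), τ = algebraMap R K a * w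
    then h.choose else 0 with hF
  have hFspec : ∀ τ ∈ T, F τ ∈ condI u ∧
      ∃ w ∈ dual (toK R K (condI u)), τ = algebraMap R K (F τ) * w := by
    intro τ hτ
    have h := hT τ hτ
    rw [hF]
    simp only [dif_pos h]
    exact ⟨h.choose_spec.1, h.choose_spec.2⟩
  set J : Ideal R := Ideal.span (↑(T.image F) : Set R) with hJ
  have hJfg : J.FG := ⟨T.image F, rfl⟩
  have hJmem : ∀ τ ∈ T, F τ ∈ J := fun τ hτ =>
    Ideal.subset_span (Finset.mem_coe.mpr (Finset.mem_image_of_mem F hτ))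
  -- v-finiteness : Cu ⊆ J_v
  have key1 : ∀ c ∈ condI u, algebraMap R K c ∈ vOp (toK R K J) := by
    intro c hc
    show algebraMap R K c ∈ dual (dual (toK R K J))
    refine mem_dual.mpr fun w hw => ?_
    have hmem : algebraMap R K c * w ∈ dual (Submodule.span R (↑T : Set K)) := by
      refine mul_span_le_one fun τ hτ => ?_
      obtain ⟨hFτ, w', hw', hτeq⟩ := hFspec τ hτ
      rw [hτeq]
      have h1 : w * algebraMap R K (F τ) ∈ (1 : Submodule R K) :=
        mem_dual.mp hw _ (FR_mem_toK.mpr (hJmem τ hτ))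
      have h2 : w' * algebraMap R K c ∈ (1 : Submodule R K) :=
        mem_dual.mp hw' _ (FR_mem_toK.mpr hc)
      have heq : algebraMap R K c * w * (algebraMap R K (F τ) * w')
          = (w * algebraMap R K (F τ)) * (w' * algebraMap R K c) := by ring
      rw [heq]
      exact one_mul_mem h1 h2
    have h2 := mem_dual.mp hTv _ hmem
    rwa [one_mul] at h2
  -- now the inclusion
  intro w hw
  rcases eq_or_ne w 0 with rfl | hw0
  · exact nag_iff.mpr ⟨0, fun y _ => ⟨0, by simp⟩⟩
  have hrad : J ≤ (condI w).radical := by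
    rw [hJ, Ideal.span_le]
    rintro r hr
    obtain ⟨τ, hτ, rfl⟩ := Finset.mem_image.mp (by exact_mod_cast hr)
    have hrP : F τ ∈ P := hCuP ((hFspec τ hτ).1)
    obtain ⟨m, _, hmC⟩ := kap_iff.mp hw _ hrP
    exact Ideal.mem_radical_iff.mpr ⟨m, hmC⟩
  obtain ⟨N, hN⟩ := Ideal.exists_pow_le_of_le_radical_of_fg hrad hJfg
  have hN1 : J ^ (N + 1) ≤ condI w :=
    (Ideal.pow_le_pow_right (Nat.le_succ N)).trans hN
  have chain : toK R K (P ^ ((n + 1) * (N + 1))) ≤ toK R K (condI w) := by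
    have e1 : P ^ ((n + 1) * (N + 1)) = (P ^ (n + 1)) ^ (N + 1) := by rw [← pow_mul]
    rw [e1]
    have s1 : toK R K (P ^ (n + 1)) ≤ vOp (toK R K J) := by
      rintro z hz
      obtain ⟨y, hy, rfl⟩ := mem_toK.mp hz
      exact key1 y (hn hy)
    calc toK R K ((P ^ (n + 1)) ^ (N + 1)) = (toK R K (P ^ (n + 1))) ^ (N + 1) := toK_pow _ N
    _ ≤ (vOp (toK R K J)) ^ (N + 1) := pow_mono_submodule s1 N
    _ ≤ vOp ((toK R K J) ^ (N + 1)) := vOp_pow_le _ N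
    _ = vOp (toK R K (J ^ (N + 1))) := by rw [toK_pow]
    _ ≤ vOp (toK R K (condI w)) := vOp_mono (toK_mono hN1)
    _ = toK R K (condI w) := condI_divisorial hw0
  refine nag_iff.mpr ⟨n * (N + 1) + N, fun y hy => ?_⟩
  have hy' : y ∈ P ^ ((n + 1) * (N + 1)) := by
    have e : n * (N + 1) + N + 1 = (n + 1) * (N + 1) := by ring
    rwa [e] at hy
  exact FR_mem_toK.mp (chain (FR_mem_toK.mpr hy'))

lemma part3_fwd (hR : IsPVMD R K) {P : Ideal R} (hP : P.IsPrime)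
    (hns : ¬ (kaplansky K P : Set K) ⊆ loc K P) :
    ∃ I : Ideal R, IsTInvertible K I ∧ I.radical = P := by
  obtain ⟨x, hx, hxl⟩ := Set.not_subset.mp hns
  have hx0 : x ≠ 0 := fun h => hxl (h ▸ zero_mem_loc hP.ne_top)
  refine ⟨condI x, condI_tinv hR hx0, le_antisymm ?_ ?_⟩
  · have hCP : condI x ≤ P := fun r hr =>
      by_contra fun hrP => hxl (loc_iff.mpr ⟨r, hrP, hr⟩)
    calc (condI x).radical ≤ P.radical := Ideal.radical_mono hCP
    _ = P := hP.radical
  · intro p hp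
    obtain ⟨m, _, hmC⟩ := kap_iff.mp hx p hp
    exact Ideal.mem_radical_iff.mpr ⟨m, hmC⟩

lemma part3_bwd {P : Ideal R} (hP : P.IsPrime) (htP : IsTIdeal K P)
    {I : Ideal R} (hI : IsTInvertible K I) (hrad : I.radical = P) :
    ∃ x ∈ (kaplansky K P : Set K), x ∉ loc K P := by
  obtain ⟨a, ha, u, hu, t, htp, heq⟩ := extract_tinv hI hP htP
  refine ⟨u, dual_toK_sub_kap hrad hu, fun hloc => ?_⟩
  obtain ⟨s, hsP, c, hc⟩ := loc_iff.mp hloc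
  have h1 : t * s = c * a := by
    apply FR_inj (K := K)
    rw [map_mul, map_mul, ← heq, ← hc]
    ring
  have haP : a ∈ P := hrad ▸ Ideal.le_radical ha
  have h2 : t * s ∈ P := h1 ▸ P.mul_mem_left c haP
  rcases hP.mem_or_mem h2 with h | h
  · exact htp h
  · exact hsP h

end AuxS34
section AuxOmega

variable {R : Type*} [CommRing R] [IsDomain R]
variable {K : Type*} [Field K] [Algebra R K] [IsFractionRing R K]

lemma mem_one_omega {S : Subalgebra R K} {z : K} :
    z ∈ (1 : Submodule ↥S K) ↔ z ∈ S := by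
  constructor
  · intro h
    obtain ⟨w, rfl⟩ := Submodule.mem_one.mp h
    exact w.2
  · intro h
    exact Submodule.mem_one.mpr ⟨⟨z, h⟩, rfl⟩

lemma smul_subalg {S : Subalgebra R K} (w : ↥S) (z : K) : w • z = (w : K) * z := by
  rw [Subalgebra.smul_def, smul_eq_mul]

/-- The `v`-closure of an ideal. -/
def vCl (K : Type*) [Field K] [Algebra R K] [IsFractionRing R K] (J : Ideal R) : Ideal R where
  carrier := {r : R | algebraMap R K r ∈ vOp (toK R K J)}
  add_mem' := fun h1 h2 => by simpa [map_add] using add_mem h1 h2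
  zero_mem' := by simpa [map_zero] using zero_mem (vOp (toK R K J))
  smul_mem' := fun c r h => by
    show algebraMap R K (c • r) ∈ vOp (toK R K J)
    rw [smul_eq_mul, map_mul, ← Algebra.smul_def]
    exact Submodule.smul_mem _ c h

lemma mem_vCl {J : Ideal R} {r : R} : r ∈ vCl K J ↔ algebraMap R K r ∈ vOp (toK R K J) :=
  Iff.rfl

lemma le_vCl (J : Ideal R) : J ≤ vCl K J := fun r hr =>
  mem_vCl.mpr (le_vOp _ (FR_mem_toK.mpr hr))

lemma toK_vCl (J : Ideal R) : toK R K (vCl K J) = vOp (toK R K J) := by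
  refine le_antisymm ?_ ?_
  · rintro z hz
    obtain ⟨r, hr, rfl⟩ := mem_toK.mp hz
    exact mem_vCl.mp hr
  · rintro z hz
    have hz1 : z ∈ (1 : Submodule R K) := vOp_le_one (toK_le_one J) hz
    obtain ⟨r, rfl⟩ := Submodule.mem_one.mp hz1
    exact FR_mem_toK.mpr (mem_vCl.mpr hz)

lemma vCl_isT (J : Ideal R) : IsTIdeal K (vCl K J) := by
  show tOp (toK R K (vCl K J)) = toK R K (vCl K J)
  refine le_antisymm ?_ (le_tOp _)
  calc tOp (toK R K (vCl K J)) ≤ vOp (toK R K (vCl K J)) := tOp_le_vOp _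
  _ = toK R K (vCl K J) := by rw [toK_vCl, vOp_idem, ← toK_vCl]

/-- Part (2), (ii) ⇒ (i). -/
lemma part2_bwd (hR : IsPVMD R K) {P : Ideal R} (hP : P.IsPrime)
    (hns : ¬ (kaplansky K P : Set K) ⊆ loc K P) :
    tOp (extendI P (kaplansky K P)) = 1 := by
  classical
  obtain ⟨x, hx, hxl⟩ := Set.not_subset.mp hns
  have hx0 : x ≠ 0 := fun h => hxl (h ▸ zero_mem_loc hP.ne_top)
  have hCP : condI x ≤ P := fun r hr =>
    by_contra fun hrP => hxl (loc_iff.mpr ⟨r, hrP, hr⟩)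
  have hCrad : (condI x).radical = P := by
    refine le_antisymm ?_ ?_
    · calc (condI x).radical ≤ P.radical := Ideal.radical_mono hCP
      _ = P := hP.radical
    · intro p hp
      obtain ⟨m, _, hmC⟩ := kap_iff.mp hx p hp
      exact Ideal.mem_radical_iff.mpr ⟨m, hmC⟩
  have hCne : (condI x : Ideal R) ≠ ⊥ := by
    obtain ⟨a, b, ha0, hb0, hab, _⟩ := condI_presentation (R := R) (K := K) hx0
    intro hb
    have h1 : b ∈ condI x := ⟨a, hab⟩
    rw [hb, Submodule.mem_bot] at h1
    exact hb0 h1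
  obtain ⟨T, hT, hTv⟩ := tinv_finite (condI_tinv hR hx0) hCne
  have hTprops : ∀ τ ∈ T, τ ∈ extendI P (kaplansky K P) ∧ τ ∈ kaplansky K P := by
    intro τ hτ
    obtain ⟨a', ha', u', hu', rfl⟩ := hT τ hτ
    have haP : a' ∈ P := hCP ha'
    have huΩ : u' ∈ kaplansky K P := dual_toK_sub_kap hCrad hu'
    constructor
    · have h1 : algebraMap R K a' ∈ extendI P (kaplansky K P) :=
        Submodule.subset_span ⟨a', haP, rfl⟩
      have h2 := Submodule.smul_mem (extendI P (kaplansky K P))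
        (⟨u', huΩ⟩ : ↥(kaplansky K P)) h1
      rwa [smul_subalg, mul_comm] at h2
    · exact mul_mem (Subalgebra.algebraMap_mem _ a') huΩ
  have hWext : Submodule.span ↥(kaplansky K P) (↑T : Set K) ≤ extendI P (kaplansky K P) :=
    Submodule.span_le.mpr fun τ hτ => (hTprops τ hτ).1
  have hext1 : extendI P (kaplansky K P) ≤ 1 := Submodule.span_le.mpr (by
    rintro z ⟨p, _, rfl⟩
    exact mem_one_omega.mpr (Subalgebra.algebraMap_mem _ p))
  have hdualW : dual (Submodule.span ↥(kaplansky K P) (↑T : Set K)) =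
      (1 : Submodule ↥(kaplansky K P) K) := by
    refine le_antisymm ?_ ?_
    · intro z hz
      refine mem_one_omega.mpr ?_
      show ∀ p ∈ P, ∃ n : ℕ, 0 < n ∧ ∃ r : R,
        z * (algebraMap R K p) ^ n = algebraMap R K r
      intro p hp
      have hτn : ∀ τ ∈ T, ∃ m : ℕ, p ^ (m + 1) ∈ condI (z * τ) := by
        intro τ hτ
        have h1 : z * τ ∈ (1 : Submodule ↥(kaplansky K P) K) :=
          mem_dual.mp hz τ (Submodule.subset_span hτ)
        have h2 : z * τ ∈ (kaplansky K P : Set K) :=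
          SetLike.mem_coe.mpr (mem_one_omega.mp h1)
        obtain ⟨m, hm0, hmC⟩ := kap_iff.mp h2 p hp
        exact ⟨m - 1, by rwa [Nat.sub_add_cancel hm0]⟩
      set G : K → ℕ := fun τ =>
        if h : ∃ m : ℕ, p ^ (m + 1) ∈ condI (z * τ) then h.choose else 0 with hG
      set N : ℕ := (T.sup G) + 1 with hNdef
      have hN : ∀ τ ∈ T, p ^ N ∈ condI (z * τ) := by
        intro τ hτ
        have h := hτn τ hτ
        have hGτ : p ^ (G τ + 1) ∈ condI (z * τ) := by
          rw [hG]
          simp only [dif_pos h]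
          exact h.choose_spec
        have hle : G τ + 1 ≤ N := Nat.succ_le_succ (Finset.le_sup hτ)
        obtain ⟨k, hk⟩ := Nat.exists_eq_add_of_le hle
        rw [hk]
        exact condI_pow_mono hGτ k
      have hzN : z * algebraMap R K (p ^ N) ∈ (1 : Submodule R K) := by
        have hd : z * algebraMap R K (p ^ N) ∈ dual (Submodule.span R (↑T : Set K)) := by
          refine mul_span_le_one fun τ hτ => ?_
          obtain ⟨c, hc⟩ := hN τ hτ
          refine Submodule.mem_one.mpr ⟨c, ?_⟩
          rw [← hc]; ring
        have h5 := mem_dual.mp hTv _ hd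
        rwa [one_mul] at h5
      obtain ⟨r, hr⟩ := Submodule.mem_one.mp hzN
      exact ⟨N, Nat.succ_pos _, r, by rw [← map_pow]; exact hr.symm⟩
    · intro z hz
      refine mem_dual.mpr fun w hw => ?_
      have hW1 : Submodule.span ↥(kaplansky K P) (↑T : Set K) ≤
          (1 : Submodule ↥(kaplansky K P) K) :=
        Submodule.span_le.mpr fun τ hτ => mem_one_omega.mpr (hTprops τ hτ).2
      exact mem_one_omega.mpr
        (mul_mem (mem_one_omega.mp hz) (mem_one_omega.mp (hW1 hw)))
  have hWne : Submodule.span ↥(kaplansky K P) (↑T : Set K) ≠ ⊥ := by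
    intro hb
    have hx1 : x ∈ (1 : Submodule R K) := by
      have h1 : Submodule.span R (↑T : Set K) ≤ ⊥ := Submodule.span_le.mpr (fun τ hτ => by
        have h2 : τ ∈ Submodule.span ↥(kaplansky K P) (↑T : Set K) := Submodule.subset_span hτ
        rw [hb, Submodule.mem_bot] at h2
        rw [h2]
        exact Submodule.zero_mem ⊥)
      have h2 : (1 : K) ∈ vOp (⊥ : Submodule R K) := vOp_mono h1 hTv
      have h5 : x ∈ dual (⊥ : Submodule R K) := mem_dual.mpr fun y hy => by
        rw [Submodule.mem_bot] at hy
        rw [hy, mul_zero]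
        exact zero_mem _
      have h6 := mem_dual.mp h2 x h5
      rwa [one_mul] at h6
    exact hxl (one_mem_loc hP.ne_top hx1)
  refine le_antisymm (tOp_le_one hext1) ?_
  have hvW : vOp (Submodule.span ↥(kaplansky K P) (↑T : Set K)) =
      (1 : Submodule ↥(kaplansky K P) K) := by
    show dual (dual _) = _
    rw [hdualW, dual_one]
  calc (1 : Submodule ↥(kaplansky K P) K)
      = vOp (Submodule.span ↥(kaplansky K P) (↑T : Set K)) := hvW.symm
  _ ≤ tOp (extendI P (kaplansky K P)) := vOp_le_tOp hWne ⟨T, rfl⟩ hWext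

/-- Part (2), (i) ⇒ (iii). -/
lemma part2_fwd (hR : IsPVMD R K) {P : Ideal R} (hbot : P ≠ ⊥) (hP : P.IsPrime)
    (htP : IsTIdeal K P) (h1 : tOp (extendI P (kaplansky K P)) = 1) :
    ∃ I : Ideal R, IsTInvertible K I ∧ I.radical = P := by
  classical
  obtain ⟨p0, hp0, hp00⟩ := (Submodule.ne_bot_iff _).mp hbot
  have hextne : extendI P (kaplansky K P) ≠ ⊥ := by
    intro hb
    have h2 : algebraMap R K p0 ∈ extendI P (kaplansky K P) :=
      Submodule.subset_span ⟨p0, hp0, rfl⟩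
    rw [hb, Submodule.mem_bot] at h2
    exact FR_ne_zero hp00 h2
  have hone : (1 : K) ∈ tOp (extendI P (kaplansky K P)) := h1 ▸ one_mem_one
  obtain ⟨W, hWb, hWf, hWl, hWm⟩ := mem_tOp hextne hone
  obtain ⟨gs, hgs⟩ := hWf
  set FS : K → (K →₀ ↥(kaplansky K P)) := fun g =>
    if h : g ∈ Submodule.span ↥(kaplansky K P) (algebraMap R K '' (P : Set R))
    then (Submodule.mem_span_set.mp h).choose else 0 with hFS
  have hFSspec : ∀ g ∈ gs, ↑(FS g).support ⊆ algebraMap R K '' (P : Set R) ∧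
      ((FS g).sum fun mi r => r • mi) = g := by
    intro g hg
    have hgmem : g ∈ Submodule.span ↥(kaplansky K P) (algebraMap R K '' (P : Set R)) :=
      hWl (hgs ▸ Submodule.subset_span hg)
    rw [hFS]
    simp only [dif_pos hgmem]
    exact (Submodule.mem_span_set.mp hgmem).choose_spec
  set U : Finset K := gs.sup (fun g => (FS g).support) with hU
  set G : K → R := fun k => if h : ∃ r ∈ P, algebraMap R K r = k then h.choose else 0 with hG
  have hGspec : ∀ k ∈ U, G k ∈ P ∧ algebraMap R K (G k) = k := by
    intro k hk
    obtain ⟨g, hg, hkg⟩ := Finset.mem_sup.mp hk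
    obtain ⟨r, hr, hrk⟩ := (hFSspec g hg).1 hkg
    have hex : ∃ r ∈ P, algebraMap R K r = k := ⟨r, hr, hrk⟩
    rw [hG]
    simp only [dif_pos hex]
    exact ⟨hex.choose_spec.1, hex.choose_spec.2⟩
  set Q0 : Ideal R := Ideal.span (insert p0 (G '' ↑U)) with hQ0
  have hQ0fg : Q0.FG := by
    refine ⟨insert p0 (U.image G), ?_⟩
    rw [hQ0, Finset.coe_insert, Finset.coe_image]
  have hQ0P : Q0 ≤ P := Ideal.span_le.mpr (by
    rintro r (rfl | ⟨k, hk, rfl⟩)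
    · exact hp0
    · exact (hGspec k hk).1)
  have hQ0ne : Q0 ≠ ⊥ := fun hb => hp00 (by
    have h2 : p0 ∈ Q0 := Ideal.subset_span (Set.mem_insert _ _)
    rwa [hb, Submodule.mem_bot] at h2)
  have hWQ : W ≤ Submodule.span ↥(kaplansky K P) (algebraMap R K '' (Q0 : Set R)) := by
    rw [← hgs]
    refine Submodule.span_le.mpr fun g hg => ?_
    rw [← (hFSspec g hg).2, Finsupp.sum]
    refine Submodule.sum_mem _ fun k hk => ?_
    refine Submodule.smul_mem _ _ (Submodule.subset_span ?_)
    have hkU : k ∈ U := Finset.mem_sup.mpr ⟨g, hg, hk⟩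
    exact ⟨G k, Ideal.subset_span (Set.mem_insert_of_mem _ ⟨k, hkU, rfl⟩),
      (hGspec k hkU).2⟩
  -- the divisorial closure of Q0 is the t-invertible ideal we need
  have hCvP : vCl K Q0 ≤ P := by
    intro r hr
    have h2 : algebraMap R K r ∈ vOp (toK R K Q0) := mem_vCl.mp hr
    have h3 : vOp (toK R K Q0) ≤ toK R K P :=
      (vOp_le_tOp (toK_ne_bot hQ0ne) (toK_fg hQ0fg) (toK_mono hQ0P)).trans (le_of_eq htP)
    exact FR_mem_toK.mp (h3 h2)
  have hCvInv : IsTInvertible K (vCl K Q0) := by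
    show tOp (toK R K (vCl K Q0) * dual (toK R K (vCl K Q0))) = 1
    rw [toK_vCl, dual_vOp]
    refine le_antisymm (tOp_le_one (Submodule.mul_le.mpr fun z hz w hw =>
      mem_dual.mp hz w hw)) ?_
    calc (1 : Submodule R K) = tOp (toK R K Q0 * dual (toK R K Q0)) :=
          (hR Q0 hQ0ne hQ0fg).symm
    _ ≤ tOp (vOp (toK R K Q0) * dual (toK R K Q0)) :=
          tOp_mono (mul_le_mul' (le_vOp _) le_rfl)
  refine ⟨vCl K Q0, hCvInv, le_antisymm
    ((Ideal.radical_mono hCvP).trans (le_of_eq hP.radical)) ?_⟩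
  intro p hp
  by_contra hpnot
  have hppow : ∀ m : ℕ, p ^ m ∉ vCl K Q0 := fun m hm =>
    hpnot (Ideal.mem_radical_iff.mpr ⟨m, hm⟩)
  obtain ⟨M, hCvM, hMp, hMt, hMpow⟩ := zornt (vCl K Q0) (vCl_isT Q0) p hppow
  obtain ⟨a, haCv, u, hu, t, htM, heq⟩ := extract_tinv hCvInv hMp hMt
  have hu' : u ∈ dual (toK R K Q0) := by
    rw [toK_vCl, dual_vOp] at hu
    exact hu
  have huW : u ∈ dual W := by
    refine dual_antitone hWQ ?_
    refine mul_span_le_one fun τ hτ => ?_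
    obtain ⟨q, hq, rfl⟩ := hτ
    have h2 : u * algebraMap R K q ∈ (1 : Submodule R K) :=
      mem_dual.mp hu' _ (FR_mem_toK.mpr hq)
    obtain ⟨r, hr⟩ := Submodule.mem_one.mp h2
    exact mem_one_omega.mpr (hr ▸ Subalgebra.algebraMap_mem _ r)
  have huΩ : u ∈ (kaplansky K P : Set K) := by
    have h2 := mem_dual.mp hWm u huW
    rw [one_mul] at h2
    exact SetLike.mem_coe.mpr (mem_one_omega.mp h2)
  have hCuM : condI u ≤ M := by
    intro c hc
    obtain ⟨d, hd⟩ := hc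
    have h3 : c * t = d * a := by
      apply FR_inj (K := K)
      rw [map_mul, map_mul, ← heq, ← hd]
      ring
    have h4 : c * t ∈ M := h3 ▸ M.mul_mem_left d (hCvM haCv)
    rcases hMp.mem_or_mem h4 with h | h
    · exact h
    · exact absurd h htM
  obtain ⟨m, _, hmC⟩ := kap_iff.mp huΩ p hp
  exact hMpow m (hCuM hmC)

end AuxOmega
section Statements

variable {R : Type*} [CommRing R] [IsDomain R]
variable {K : Type*} [Field K] [Algebra R K] [IsFractionRing R K]

/-- Let `R` be a PVMD and `P` a `t`-prime ideal of `R`. Then: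
(1) `T(P) ⊊ Ω(P)` iff `T(P) = R_P ∩ Ω(P)` and `Ω(P) ⊄ R_P`; (2) the following are
equivalent: `(P·Ω(P))_{t₁} = Ω(P)`; `Ω(P) ⊄ R_P`; `P = √I` for some `t`-invertible
ideal `I` of `R`. -/
theorem statement_17 (hR : IsPVMD R K) (P : Ideal R) (hbot : P ≠ ⊥) (hP : P.IsPrime)
    (htP : IsTIdeal K P) :
    ((nagata K P : Set K) ⊂ (kaplansky K P : Set K) ↔
        (nagata K P : Set K) = loc K P ∩ (kaplansky K P : Set K) ∧
          ¬ (kaplansky K P : Set K) ⊆ loc K P) ∧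
      (tOp (extendI P (kaplansky K P)) = 1 ↔ ¬ (kaplansky K P : Set K) ⊆ loc K P) ∧
      (¬ (kaplansky K P : Set K) ⊆ loc K P ↔
        ∃ I : Ideal R, IsTInvertible K I ∧ I.radical = P) := by
  have hTsub : (nagata K P : Set K) ⊆ (kaplansky K P : Set K) := fun x hx => nagata_sub_kap hx
  have hA : ∀ x : K, x ∈ loc K P → x ∈ (kaplansky K P : Set K) → x ∈ (nagata K P : Set K) :=
    fun x h1 h2 => locKap_sub_nagata hR hP h1 h2
  refine ⟨?_, ?_, ?_⟩
  · rw [Set.ssubset_def]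
    constructor
    · rintro ⟨_, hne⟩
      have hns : ¬ (kaplansky K P : Set K) ⊆ loc K P := by
        intro hsub
        exact hne fun w hw => hA w (hsub hw) hw
      refine ⟨?_, hns⟩
      apply Set.Subset.antisymm
      · intro u hu
        refine ⟨?_, hTsub hu⟩
        by_contra hul
        exact hne (kap_sub_nagata_of_exists hR hbot hP hu hul)
      · rintro u ⟨h1, h2⟩
        exact hA u h1 h2
    · rintro ⟨hEq, hns⟩
      obtain ⟨w, hw, hwl⟩ := Set.not_subset.mp hns
      refine ⟨hTsub, fun hsub => ?_⟩
      have hmem : w ∈ (nagata K P : Set K) := hsub hw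
      rw [hEq] at hmem
      exact hwl hmem.1
  · constructor
    · intro h1
      obtain ⟨I, hI, hrad⟩ := part2_fwd hR hbot hP htP h1
      obtain ⟨x, hx, hxl⟩ := part3_bwd hP htP hI hrad
      exact fun hsub => hxl (hsub hx)
    · exact part2_bwd hR hP
  · constructor
    · exact part3_fwd hR hP
    · rintro ⟨I, hI, hrad⟩
      obtain ⟨x, hx, hxl⟩ := part3_bwd hP htP hI hrad
      exact fun hsub => hxl (hsub hx)

end Statements

end

end PVMDPaper
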